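/- Marginalization over the segment containing a fixed data point: for any function a : ℕ × ℕ → ℝ, integers n ≥ 1, k ≥ 1, and any t with 1 ≤ t ≤ n, one has Σ_{m=1}^{k} Σ_{0 ≤ i < t} Σ_{t ≤ j ≤ n} S_{m-1}(0, i) · a(i, j) · S_{k-m}(j, n) = S_k(0, n). (In every segmentation into k segments, the data point t lies in exactly one segment m with boundaries i = t_{m-1} < t ≤ t_m = j; summing the factorized contributions over all possible (m, i, j) recovers the total sum over all segmentations. This identity underlies the efficient computation of the Bayesian regression curve.) -/

import Mathlib

open Finset in
open scoped Classical in
/-- `S a k i j` is the sum, over all integer tuples `(t 0, ..., t k)` with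
`i = t 0 < t 1 < ... < t k = j`, of the product `∏_{q=1}^k a (t (q-1), t q)`.
In Bayesian piecewise constant regression it is the total (unnormalized) evidence of the
data points `y_{i+1}, ..., y_j` segmented into `k` segments, where `a (i, j)` is the
single-segment evidence of `y_{i+1}, ..., y_j`. -/
noncomputable def S (a : ℕ × ℕ → ℝ) (k i j : ℕ) : ℝ :=
  ∑ t ∈ Finset.univ.filter (fun t : Fin (k + 1) → Fin (j + 1) =>
      StrictMono t ∧ (t 0 : ℕ) = i ∧ (t (Fin.last k) : ℕ) = j),
    ∏ q : Fin k, a ((t q.castSucc : ℕ), (t q.succ : ℕ))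

/-- Recursive counterpart of `S`. -/
noncomputable def T (a : ℕ × ℕ → ℝ) : ℕ → ℕ → ℕ → ℝ
  | 0, i, j => if i = j then 1 else 0
  | (k+1), i, j => ∑ l ∈ Finset.Ico i j, T a k i l * a (l, j)

open Finset in
open scoped Classical in
lemma S_zero (a : ℕ × ℕ → ℝ) (i j : ℕ) : S a 0 i j = if i = j then 1 else 0 := by
  unfold S
  simp only [Fin.prod_univ_zero, Finset.sum_const, nsmul_eq_mul, mul_one]
  by_cases h : i = j
  · subst h
    rw [if_pos rfl]
    have : (Finset.univ.filter (fun t : Fin 1 → Fin (i + 1) =>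
        StrictMono t ∧ (t 0 : ℕ) = i ∧ (t (Fin.last 0) : ℕ) = i))
        = {fun _ => Fin.last i} := by
      ext t
      simp only [Finset.mem_filter, Finset.mem_univ, true_and, Finset.mem_singleton]
      constructor
      · rintro ⟨-, h0, -⟩
        funext q
        have hq : q = 0 := Subsingleton.elim _ _
        subst hq
        exact Fin.ext (by simpa [Fin.last] using h0)
      · rintro rfl
        exact ⟨Subsingleton.strictMono _, by simp [Fin.last], by simp [Fin.last]⟩
    rw [this]
    simp
  · rw [if_neg h]
    have : (Finset.univ.filter (fun t : Fin 1 → Fin (j + 1) =>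
        StrictMono t ∧ (t 0 : ℕ) = i ∧ (t (Fin.last 0) : ℕ) = j)) = ∅ := by
      ext t
      simp only [Finset.mem_filter, Finset.mem_univ, true_and, Finset.notMem_empty,
        iff_false, not_and]
      intro _ h0 h1
      apply h
      rw [← h0, show t 0 = t (Fin.last 0) from congrArg t (Subsingleton.elim _ _), h1]
    rw [this]
    simp

open Finset in
open scoped Classical in
lemma S_succ (a : ℕ × ℕ → ℝ) (k i j : ℕ) :
    S a (k + 1) i j = ∑ l ∈ Finset.Ico i j, S a k i l * a (l, j) := by
  unfold S
  have hmaps : ∀ t ∈ Finset.univ.filter (fun t : Fin (k + 2) → Fin (j + 1) =>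
      StrictMono t ∧ (t 0 : ℕ) = i ∧ (t (Fin.last (k + 1)) : ℕ) = j),
      (fun t : Fin (k + 2) → Fin (j + 1) => (t (Fin.last k).castSucc : ℕ)) t ∈ Finset.Ico i j := by
    intro t ht
    rw [Finset.mem_filter] at ht
    obtain ⟨-, hmono, h0, hlast⟩ := ht
    show (t (Fin.last k).castSucc : ℕ) ∈ Finset.Ico i j
    rw [Finset.mem_Ico]
    have h1 := Fin.le_def.mp (hmono.monotone (Fin.zero_le ((Fin.last k).castSucc)))
    have h2 := Fin.lt_def.mp (hmono (Fin.castSucc_lt_last (Fin.last k)))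
    omega
  rw [← Finset.sum_fiberwise_of_maps_to hmaps]
  refine Finset.sum_congr rfl fun l hl => ?_
  rw [Finset.mem_Ico] at hl
  rw [Finset.filter_filter, Finset.sum_mul]
  have hjl : l + 1 ≤ j + 1 := by omega
  set F : (Fin (k + 2) → Fin (j + 1)) → Fin (k + 1) → Fin (l + 1) :=
    fun t q => ⟨min ((t q.castSucc : ℕ)) l, by omega⟩ with hF
  set G : (Fin (k + 1) → Fin (l + 1)) → Fin (k + 2) → Fin (j + 1) :=
    fun s => Fin.snoc (fun q : Fin (k + 1) => Fin.castLE hjl (s q)) (Fin.last j) with hG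
  have hFval : ∀ t : Fin (k + 2) → Fin (j + 1), StrictMono t →
      (t (Fin.last k).castSucc : ℕ) = l →
      ∀ q : Fin (k + 1), (F t q : ℕ) = (t q.castSucc : ℕ) := by
    intro t hmono hfib q
    have hle : (t q.castSucc : ℕ) ≤ l := by
      rw [← hfib]
      exact Fin.le_def.mp (hmono.monotone (Fin.castSucc_le_castSucc_iff.mpr (Fin.le_last q)))
    simpa [hF] using min_eq_left hle
  have hGval : ∀ (s : Fin (k + 1) → Fin (l + 1)) (q : Fin (k + 1)),
      (G s q.castSucc : ℕ) = (s q : ℕ) := by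
    intro s q
    simp [hG]
  have hGlast : ∀ s : Fin (k + 1) → Fin (l + 1), (G s (Fin.last (k + 1)) : ℕ) = j := by
    intro s
    simp [hG]
  refine Finset.sum_nbij' F G ?_ ?_ ?_ ?_ ?_
  · -- F maps into the target set
    intro t ht
    rw [Finset.mem_filter] at ht
    obtain ⟨-, ⟨hmono, h0, hlast⟩, hfib⟩ := ht
    rw [Finset.mem_filter]
    refine ⟨Finset.mem_univ _, ?_, ?_, ?_⟩
    · intro q q' hqq'
      rw [Fin.lt_def, hFval t hmono hfib, hFval t hmono hfib]
      exact Fin.lt_def.mp (hmono (Fin.castSucc_lt_castSucc_iff.mpr hqq'))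
    · rw [hFval t hmono hfib 0, Fin.castSucc_zero, h0]
    · rw [hFval t hmono hfib (Fin.last k), hfib]
  · -- G maps into the source set
    intro s hs
    rw [Finset.mem_filter] at hs
    obtain ⟨-, hmono, h0, hlast⟩ := hs
    rw [Finset.mem_filter]
    refine ⟨Finset.mem_univ _, ⟨?_, ?_, ?_⟩, ?_⟩
    · rw [Fin.strictMono_iff_lt_succ]
      intro q
      induction q using Fin.lastCases with
      | last =>
        rw [Fin.lt_def, Fin.succ_last, hGlast, hGval s (Fin.last k), hlast]
        omega
      | cast p =>
        rw [Fin.lt_def, Fin.succ_castSucc, hGval s p.castSucc, hGval s p.succ]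
        exact Fin.lt_def.mp (hmono (Fin.castSucc_lt_succ : p.castSucc < p.succ))
    · rw [show (0 : Fin (k + 2)) = (0 : Fin (k + 1)).castSucc by simp, hGval s 0, h0]
    · exact hGlast s
    · rw [hGval s (Fin.last k), hlast]
  · -- left inverse
    intro t ht
    rw [Finset.mem_filter] at ht
    obtain ⟨-, ⟨hmono, h0, hlast⟩, hfib⟩ := ht
    funext q
    induction q using Fin.lastCases with
    | last =>
      apply Fin.ext
      rw [hGlast, hlast]
    | cast p =>
      apply Fin.ext
      rw [hGval (F t) p, hFval t hmono hfib p]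
  · -- right inverse
    intro s hs
    funext q
    apply Fin.ext
    have : (F (G s) q : ℕ) = min ((G s q.castSucc : ℕ)) l := rfl
    rw [this, hGval s q, min_eq_left (Fin.is_le _)]
  · -- values agree
    intro t ht
    rw [Finset.mem_filter] at ht
    obtain ⟨-, ⟨hmono, h0, hlast⟩, hfib⟩ := ht
    rw [Fin.prod_univ_castSucc]
    congr 1
    · refine Finset.prod_congr rfl fun q _ => ?_
      rw [hFval t hmono hfib q.castSucc, hFval t hmono hfib q.succ, Fin.succ_castSucc]
    · rw [hfib, Fin.succ_last, hlast]

lemma S_eq_T (a : ℕ × ℕ → ℝ) : ∀ (k i j : ℕ), S a k i j = T a k i j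
  | 0, i, j => by rw [S_zero]; rfl
  | (k + 1), i, j => by
    rw [S_succ]
    show _ = ∑ l ∈ Finset.Ico i j, T a k i l * a (l, j)
    exact Finset.sum_congr rfl fun l _ => by rw [S_eq_T a k i l]

open Finset in
lemma sum_swap_tri (f : ℕ → ℕ → ℝ) (p n : ℕ) :
    ∑ j ∈ Finset.Icc p n, ∑ l ∈ Finset.Ico j n, f j l
      = ∑ l ∈ Finset.Ico p n, ∑ j ∈ Finset.Icc p l, f j l := by
  have h1 : ∀ j ∈ Finset.Icc p n, ∑ l ∈ Finset.Ico j n, f j l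
      = ∑ l ∈ Finset.Ico p n, if l ∈ Finset.Ico j n then f j l else 0 := by
    intro j hj
    rw [Finset.mem_Icc] at hj
    rw [Finset.sum_ite_mem, Finset.Ico_inter_Ico, max_eq_right hj.1, min_self]
  rw [Finset.sum_congr rfl h1, Finset.sum_comm]
  refine Finset.sum_congr rfl fun l hl => ?_
  rw [Finset.mem_Ico] at hl
  have h2 : ∀ j ∈ Finset.Icc p n, (if l ∈ Finset.Ico j n then f j l else 0)
      = if j ∈ Finset.Iic l then f j l else 0 := by
    intro j hj
    by_cases hle : j ≤ l
    · rw [if_pos (Finset.mem_Ico.mpr ⟨hle, hl.2⟩), if_pos (Finset.mem_Iic.mpr hle)]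
    · rw [if_neg (fun hmem => hle (Finset.mem_Ico.mp hmem).1),
        if_neg (fun hmem => hle (Finset.mem_Iic.mp hmem))]
  have hinter : Finset.Icc p n ∩ Finset.Iic l = Finset.Icc p l := by
    ext x
    simp only [Finset.mem_inter, Finset.mem_Icc, Finset.mem_Iic]
    omega
  rw [Finset.sum_congr rfl h2, Finset.sum_ite_mem, hinter]

lemma T_key (a : ℕ × ℕ → ℝ) : ∀ k, 1 ≤ k → ∀ n p, 1 ≤ p → p ≤ n →
    ∑ m ∈ Finset.Icc 1 k, ∑ i ∈ Finset.range p, ∑ j ∈ Finset.Icc p n,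
      T a (m - 1) 0 i * a (i, j) * T a (k - m) j n = T a k 0 n := by
  intro k hk
  induction k, hk using Nat.le_induction with
  | base =>
    intro n p hp hpn
    rw [Finset.Icc_self, Finset.sum_singleton]
    show ∑ i ∈ Finset.range p, ∑ j ∈ Finset.Icc p n,
      T a 0 0 i * a (i, j) * T a 0 j n = T a 1 0 n
    rw [Finset.sum_eq_single_of_mem 0 (Finset.mem_range.mpr hp)]
    · rw [Finset.sum_eq_single_of_mem n (Finset.mem_Icc.mpr ⟨hpn, le_rfl⟩)]
      · show (if (0:ℕ) = 0 then (1:ℝ) else 0) * a (0, n) * (if n = n then (1:ℝ) else 0)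
          = T a 1 0 n
        rw [if_pos rfl, if_pos rfl, one_mul, mul_one]
        show _ = ∑ l ∈ Finset.Ico 0 n, T a 0 0 l * a (l, n)
        rw [Finset.sum_eq_single_of_mem 0 (Finset.mem_Ico.mpr ⟨le_rfl, by omega⟩)]
        · show a (0, n) = (if (0:ℕ) = 0 then (1:ℝ) else 0) * a (0, n)
          rw [if_pos rfl, one_mul]
        · intro b _ hb
          show (if (0:ℕ) = b then (1:ℝ) else 0) * a (b, n) = 0
          rw [if_neg (fun h => hb h.symm), zero_mul]
      · intro b hb hbn
        show T a 0 0 0 * a (0, b) * (if b = n then (1:ℝ) else 0) = 0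
        rw [if_neg hbn, mul_zero]
    · intro b _ hb
      apply Finset.sum_eq_zero
      intro j _
      show (if (0:ℕ) = b then (1:ℝ) else 0) * a (b, j) * T a 0 j n = 0
      rw [if_neg (fun h => hb h.symm), zero_mul, zero_mul]
  | succ k hk ih =>
    intro n p hp hpn
    rw [Finset.sum_Icc_succ_top (by omega : 1 ≤ k + 1)]
    have hlastterm : ∑ i ∈ Finset.range p, ∑ j ∈ Finset.Icc p n,
        T a (k + 1 - 1) 0 i * a (i, j) * T a (k + 1 - (k + 1)) j n
        = ∑ i ∈ Finset.range p, T a k 0 i * a (i, n) := by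
      refine Finset.sum_congr rfl fun i _ => ?_
      rw [Finset.sum_eq_single_of_mem n (Finset.mem_Icc.mpr ⟨hpn, le_rfl⟩)]
      · simp only [Nat.add_sub_cancel, Nat.sub_self]
        show T a k 0 i * a (i, n) * (if n = n then (1:ℝ) else 0) = _
        rw [if_pos rfl, mul_one]
      · intro b hb hbn
        simp only [Nat.sub_self]
        show T a (k + 1 - 1) 0 i * a (i, b) * (if b = n then (1:ℝ) else 0) = 0
        rw [if_neg hbn, mul_zero]
    have hmain : ∑ m ∈ Finset.Icc 1 k, ∑ i ∈ Finset.range p, ∑ j ∈ Finset.Icc p n,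
        T a (m - 1) 0 i * a (i, j) * T a (k + 1 - m) j n
        = ∑ l ∈ Finset.Ico p n, T a k 0 l * a (l, n) := by
      have hstep : ∀ m ∈ Finset.Icc 1 k, ∀ i : ℕ,
          ∑ j ∈ Finset.Icc p n, T a (m - 1) 0 i * a (i, j) * T a (k + 1 - m) j n
          = ∑ l ∈ Finset.Ico p n,
              (∑ j ∈ Finset.Icc p l, T a (m - 1) 0 i * a (i, j) * T a (k - m) j l)
                * a (l, n) := by
        intro m hm i
        rw [Finset.mem_Icc] at hm
        have hm' : k + 1 - m = (k - m) + 1 := by omega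
        rw [hm']
        have : ∀ j : ℕ, T a (k - m + 1) j n = ∑ l ∈ Finset.Ico j n, T a (k - m) j l * a (l, n) :=
          fun j => rfl
        calc ∑ j ∈ Finset.Icc p n, T a (m - 1) 0 i * a (i, j) * T a (k - m + 1) j n
            = ∑ j ∈ Finset.Icc p n, ∑ l ∈ Finset.Ico j n,
                T a (m - 1) 0 i * a (i, j) * T a (k - m) j l * a (l, n) := by
              refine Finset.sum_congr rfl fun j _ => ?_
              rw [this j, Finset.mul_sum]
              refine Finset.sum_congr rfl fun l _ => by ring
          _ = ∑ l ∈ Finset.Ico p n, ∑ j ∈ Finset.Icc p l,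
                T a (m - 1) 0 i * a (i, j) * T a (k - m) j l * a (l, n) :=
              sum_swap_tri _ p n
          _ = _ := by
              refine Finset.sum_congr rfl fun l _ => ?_
              rw [Finset.sum_mul]
      calc ∑ m ∈ Finset.Icc 1 k, ∑ i ∈ Finset.range p, ∑ j ∈ Finset.Icc p n,
            T a (m - 1) 0 i * a (i, j) * T a (k + 1 - m) j n
          = ∑ m ∈ Finset.Icc 1 k, ∑ i ∈ Finset.range p, ∑ l ∈ Finset.Ico p n,
              (∑ j ∈ Finset.Icc p l, T a (m - 1) 0 i * a (i, j) * T a (k - m) j l)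
                * a (l, n) := by
            refine Finset.sum_congr rfl fun m hm => Finset.sum_congr rfl fun i _ => ?_
            exact hstep m hm i
        _ = ∑ m ∈ Finset.Icc 1 k, ∑ l ∈ Finset.Ico p n, ∑ i ∈ Finset.range p,
              (∑ j ∈ Finset.Icc p l, T a (m - 1) 0 i * a (i, j) * T a (k - m) j l)
                * a (l, n) := by
            exact Finset.sum_congr rfl fun m _ => Finset.sum_comm
        _ = ∑ l ∈ Finset.Ico p n, ∑ m ∈ Finset.Icc 1 k, ∑ i ∈ Finset.range p,
              (∑ j ∈ Finset.Icc p l, T a (m - 1) 0 i * a (i, j) * T a (k - m) j l)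
                * a (l, n) := Finset.sum_comm
        _ = ∑ l ∈ Finset.Ico p n,
              (∑ m ∈ Finset.Icc 1 k, ∑ i ∈ Finset.range p, ∑ j ∈ Finset.Icc p l,
                T a (m - 1) 0 i * a (i, j) * T a (k - m) j l) * a (l, n) := by
            refine Finset.sum_congr rfl fun l _ => ?_
            rw [Finset.sum_mul]
            refine Finset.sum_congr rfl fun m _ => ?_
            rw [Finset.sum_mul]
        _ = ∑ l ∈ Finset.Ico p n, T a k 0 l * a (l, n) := by
            refine Finset.sum_congr rfl fun l hl => ?_
            rw [Finset.mem_Ico] at hl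
            rw [ih l p hp hl.1]
    rw [hlastterm, hmain]
    show _ = ∑ l ∈ Finset.Ico 0 n, T a k 0 l * a (l, n)
    rw [← Finset.sum_Ico_consecutive _ (Nat.zero_le p) hpn]
    rw [Finset.range_eq_Ico]
    ring

/-- Marginalization over the segment containing a fixed data point `t`:
`∑_{m=1}^k ∑_{0 ≤ i < t} ∑_{t ≤ j ≤ n} S (m-1) (0, i) * a (i, j) * S (k-m) (j, n) = S k (0, n)`. -/
theorem marginalization_over_segment (a : ℕ × ℕ → ℝ) (n k t : ℕ)
    (hn : 1 ≤ n) (hk : 1 ≤ k) (ht1 : 1 ≤ t) (htn : t ≤ n) :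
    ∑ m ∈ Finset.Icc 1 k, ∑ i ∈ Finset.range t, ∑ j ∈ Finset.Icc t n,
      S a (m - 1) 0 i * a (i, j) * S a (k - m) j n = S a k 0 n := by
  simp only [S_eq_T]
  exact T_key a k hk n t ht1 htn
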